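/- For every choice of (a,b) ∈ {2,3}^2, the 5×5 symmetric matrix with rows (0,1,2,a,1),(1,0,1,2,1),(2,1,0,1,2),(a,2,1,0,b),(1,1,2,b,0) has second largest eigenvalue strictly greater than (17-√329)/2. -/

import Mathlib

noncomputable def sortedEigenvalues {ι : Type*} [Fintype ι] [DecidableEq ι]
    (A : Matrix ι ι ℝ) (hA : A.IsHermitian) : List ℝ :=
  (Finset.univ.val.map hA.eigenvalues).sort (· ≤ ·)

/-- `eig A hA k` is the `k`-th largest eigenvalue of `A` (1-indexed). -/
noncomputable def eig {ι : Type*} [Fintype ι] [DecidableEq ι]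
    (A : Matrix ι ι ℝ) (hA : A.IsHermitian) (k : ℕ) : ℝ :=
  (sortedEigenvalues A hA)[Fintype.card ι - k]!

open Matrix

lemma trace_eq_sum_eigs {n : Type*} [Fintype n] [DecidableEq n]
    {A : Matrix n n ℝ} (hA : A.IsHermitian) : A.trace = ∑ i, hA.eigenvalues i := by
  nth_rewrite 1 [hA.spectral_theorem]
  rw [Unitary.conjStarAlgAut_apply]
  rw [Matrix.trace_mul_cycle]
  rw [(Matrix.mem_unitaryGroup_iff').mp (hA.eigenvectorUnitary).2, one_mul, Matrix.trace_diagonal]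
  simp

lemma det_sub_smul_eq {n : Type*} [Fintype n] [DecidableEq n]
    {A : Matrix n n ℝ} (hA : A.IsHermitian) (c : ℝ) :
    (A - c • 1).det = ∏ i, (hA.eigenvalues i - c) := by
  have hU : (hA.eigenvectorUnitary : Matrix n n ℝ) * star (hA.eigenvectorUnitary : Matrix n n ℝ) = 1 :=
    (Matrix.mem_unitaryGroup_iff).mp (hA.eigenvectorUnitary).2
  have key : A - c • 1 = (hA.eigenvectorUnitary : Matrix n n ℝ) *
      (diagonal (fun i => hA.eigenvalues i - c)) * star (hA.eigenvectorUnitary : Matrix n n ℝ) := by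
    have : diagonal (fun i => hA.eigenvalues i - c)
        = diagonal (RCLike.ofReal ∘ hA.eigenvalues) - c • (1 : Matrix n n ℝ) := by
      rw [Matrix.smul_one_eq_diagonal, ← Matrix.diagonal_sub]
      rfl
    rw [this, Matrix.mul_sub, Matrix.sub_mul, ← Unitary.conjStarAlgAut_apply (S := ℝ) (u := hA.eigenvectorUnitary), ← hA.spectral_theorem]
    congr 1
    rw [Matrix.mul_smul, Matrix.smul_mul, mul_one, hU]
  rw [key, Matrix.det_mul, Matrix.det_mul, mul_comm, ← mul_assoc, ← Matrix.det_mul,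
    (Matrix.mem_unitaryGroup_iff').mp (hA.eigenvectorUnitary).2]
  simp [Matrix.det_diagonal]

lemma eig2_gt {A : Matrix (Fin 5) (Fin 5) ℝ} (hA : A.IsHermitian) {c : ℝ} (hc : c < 0)
    (htr : A.trace = 0) (hdet : (A - c • 1).det < 0) : eig A hA 2 > c := by
  rw [trace_eq_sum_eigs hA] at htr
  rw [det_sub_smul_eq hA] at hdet
  set l := sortedEigenvalues A hA with hldef
  have hl : (l : Multiset ℝ) = Finset.univ.val.map hA.eigenvalues :=
    Multiset.sort_eq _ _
  have hlen : l.length = 5 := by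
    have := congrArg Multiset.card hl
    simpa using this
  have hsort : l.Pairwise (· ≤ ·) := Multiset.pairwise_sort _ _
  have hsum : l.sum = 0 := by
    rw [← htr, Finset.sum, ← hl, Multiset.sum_coe]
  have hprod : (l.map (fun x => x - c)).prod < 0 := by
    rw [← Multiset.prod_coe, ← Multiset.map_coe, hl, Multiset.map_map] at *
    exact hdet
  have heig : eig A hA 2 = l[3]! := by
    simp [eig, hldef]
  rw [heig]
  clear_value l
  clear hldef hl
  rcases l with _ | ⟨x0, _ | ⟨x1, _ | ⟨x2, _ | ⟨x3, _ | ⟨x4, rest⟩⟩⟩⟩⟩ <;> simp_all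
  obtain rfl : rest = [] := by
    rcases rest with _ | _ <;> simp_all
  simp_all [List.pairwise_cons]
  obtain ⟨⟨h01, h02, h03, h04⟩, ⟨h12, h13, h14⟩, ⟨h23, h24⟩, h34⟩ := hsort
  by_contra hx3
  push_neg at hx3
  have hp01 : (x0 - c) * (x1 - c) ≥ 0 :=
    mul_nonneg_of_nonpos_of_nonpos (by linarith) (by linarith)
  have hp23 : (x2 - c) * (x3 - c) ≥ 0 :=
    mul_nonneg_of_nonpos_of_nonpos (by linarith) (by linarith)
  have h4 : x4 - c > 0 := by linarith
  nlinarith [mul_nonneg (mul_nonneg hp01 hp23) (le_of_lt h4)]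

lemma fin_fix (h : ((3:Fin 4):ℕ) < 5) : (⟨((3:Fin 4):ℕ), h⟩ : Fin 5) = (3:Fin 5) := rfl

set_option maxHeartbeats 2000000 in
lemma det22 (c : ℝ) :
    ((!![(0:ℝ),1,2,2,1;1,0,1,2,1;2,1,0,1,2;2,2,1,0,2;1,1,2,2,0]) - c • 1).det
      = 10 + 48*c + 62*c^2 + 25*c^3 - c^5 := by
  have hM : (!![(0:ℝ),1,2,2,1;1,0,1,2,1;2,1,0,1,2;2,2,1,0,2;1,1,2,2,0]) - c • 1
      = !![-c,1,2,2,1;1,-c,1,2,1;2,1,-c,1,2;2,2,1,-c,2;1,1,2,2,-c] := by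
    ext i j
    fin_cases i <;> fin_cases j <;> simp [Matrix.one_apply]
  rw [hM]
  simp [Matrix.det_succ_row_zero, Fin.sum_univ_succ, Fin.succAbove]
  ring

set_option maxHeartbeats 2000000 in
lemma det23 (c : ℝ) :
    ((!![(0:ℝ),1,2,2,1;1,0,1,2,1;2,1,0,1,2;2,2,1,0,3;1,1,2,3,0]) - c • 1).det
      = 12 + 56*c + 74*c^2 + 30*c^3 - c^5 := by
  have hM : (!![(0:ℝ),1,2,2,1;1,0,1,2,1;2,1,0,1,2;2,2,1,0,3;1,1,2,3,0]) - c • 1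
      = !![-c,1,2,2,1;1,-c,1,2,1;2,1,-c,1,2;2,2,1,-c,3;1,1,2,3,-c] := by
    ext i j
    fin_cases i <;> fin_cases j <;> simp [Matrix.one_apply]
  rw [hM]
  simp [Matrix.det_succ_row_zero, Fin.sum_univ_succ, Fin.succAbove]
  ring

set_option maxHeartbeats 2000000 in
lemma det32 (c : ℝ) :
    ((!![(0:ℝ),1,2,3,1;1,0,1,2,1;2,1,0,1,2;3,2,1,0,2;1,1,2,2,0]) - c • 1).det
      = 12 + 56*c + 74*c^2 + 30*c^3 - c^5 := by
  have hM : (!![(0:ℝ),1,2,3,1;1,0,1,2,1;2,1,0,1,2;3,2,1,0,2;1,1,2,2,0]) - c • 1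
      = !![-c,1,2,3,1;1,-c,1,2,1;2,1,-c,1,2;3,2,1,-c,2;1,1,2,2,-c] := by
    ext i j
    fin_cases i <;> fin_cases j <;> simp [Matrix.one_apply]
  rw [hM]
  simp [Matrix.det_succ_row_zero, Fin.sum_univ_succ, Fin.succAbove]
  ring

set_option maxHeartbeats 2000000 in
lemma det33 (c : ℝ) :
    ((!![(0:ℝ),1,2,3,1;1,0,1,2,1;2,1,0,1,2;3,2,1,0,3;1,1,2,3,0]) - c • 1).det
      = 20 + 74*c + 88*c^2 + 35*c^3 - c^5 := by
  have hM : (!![(0:ℝ),1,2,3,1;1,0,1,2,1;2,1,0,1,2;3,2,1,0,3;1,1,2,3,0]) - c • 1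
      = !![-c,1,2,3,1;1,-c,1,2,1;2,1,-c,1,2;3,2,1,-c,3;1,1,2,3,-c] := by
    ext i j
    fin_cases i <;> fin_cases j <;> simp [Matrix.one_apply]
  rw [hM]
  simp [Matrix.det_succ_row_zero, Fin.sum_univ_succ, Fin.succAbove]
  ring

theorem forbidden_H3_submatrices (a b : ℝ)
    (ha : a = 2 ∨ a = 3) (hb : b = 2 ∨ b = 3)
    (h : (!![(0:ℝ),1,2,a,1;1,0,1,2,1;2,1,0,1,2;a,2,1,0,b;1,1,2,b,0]).IsHermitian) :
    eig _ h 2 > (17 - Real.sqrt 329) / 2 := by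
  have hs : Real.sqrt 329 ^ 2 = 329 := Real.sq_sqrt (by norm_num)
  have hs0 : (0:ℝ) ≤ Real.sqrt 329 := Real.sqrt_nonneg _
  set s := Real.sqrt 329 with hsdef
  have hc : (17 - s)/2 < 0 := by nlinarith
  rcases ha with rfl | rfl <;> rcases hb with rfl | rfl
  · refine eig2_gt h hc ?_ ?_
    · simp [Matrix.trace, Fin.sum_univ_five, Matrix.diag]
    · rw [det22]
      have e : 10 + 48*((17-s)/2) + 62*((17-s)/2)^2 + 25*((17-s)/2)^3 - ((17-s)/2)^5
          = -759219 + 41857*s := by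
        linear_combination (-71499/32 + (3119/32)*s + (-85/32)*s^2 + (1/32)*s^3) * hs
      rw [e]
      nlinarith [hs, hs0, sq_nonneg (41857*s - 759219)]
  · refine eig2_gt h hc ?_ ?_
    · simp [Matrix.trace, Fin.sum_univ_five, Matrix.diag]
    · rw [det23]
      have e : 12 + 56*((17-s)/2) + 74*((17-s)/2)^2 + 30*((17-s)/2)^3 - ((17-s)/2)^5
          = -1487475/2 + (82007/2)*s := by
        linear_combination (-70383/32 + (3099/32)*s + (-85/32)*s^2 + (1/32)*s^3) * hs
      rw [e]
      nlinarith [hs, hs0, sq_nonneg (82007*s - 1487475)]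
  · refine eig2_gt h hc ?_ ?_
    · simp [Matrix.trace, Fin.sum_univ_five, Matrix.diag]
    · rw [det32]
      have e : 12 + 56*((17-s)/2) + 74*((17-s)/2)^2 + 30*((17-s)/2)^3 - ((17-s)/2)^5
          = -1487475/2 + (82007/2)*s := by
        linear_combination (-70383/32 + (3099/32)*s + (-85/32)*s^2 + (1/32)*s^3) * hs
      rw [e]
      nlinarith [hs, hs0, sq_nonneg (82007*s - 1487475)]
  · refine eig2_gt h hc ?_ ?_
    · simp [Matrix.trace, Fin.sum_univ_five, Matrix.diag]
    · rw [det33]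
      have e : 20 + 74*((17-s)/2) + 88*((17-s)/2)^2 + 35*((17-s)/2)^3 - ((17-s)/2)^5
          = -727856 + 40128*s := by
        linear_combination (-69251/32 + (3079/32)*s + (-85/32)*s^2 + (1/32)*s^3) * hs
      rw [e]
      nlinarith [hs, hs0, sq_nonneg (40128*s - 727856)]
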